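/- Let (X, μ) be a probability space, let f : X → X be a measure-preserving map, let P ⊆ X be a measurable set and let ε > 0. Then the set of natural numbers { n ∈ ℕ : μ(f^{-[n]}(P) ∩ P) ≥ μ(P)²·(1 − ε) } is infinite. -/

import Mathlib

open MeasureTheory Filter
open scoped ENNReal

private lemma aux_sq_lintegral_le {X : Type*} [MeasurableSpace X] (μ : Measure X)
    [IsProbabilityMeasure μ] {g : X → ℝ≥0∞} (hg : Measurable g) :
    (∫⁻ x, g x ∂μ) ^ 2 ≤ ∫⁻ x, g x ^ 2 ∂μ := by
  have hpq : Real.HolderConjugate 2 2 := by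
    constructor <;> norm_num
  have h := ENNReal.lintegral_mul_le_Lp_mul_Lq μ hpq hg.aemeasurable
    (aemeasurable_const : AEMeasurable (fun _ : X => (1 : ℝ≥0∞)) μ)
  simp only [Pi.mul_apply, mul_one, ENNReal.one_rpow, lintegral_one, measure_univ,
    ENNReal.one_rpow] at h
  have h2 : ∀ x, g x ^ (2 : ℝ) = g x ^ 2 := fun x => by
    rw [show (2 : ℝ) = ((2 : ℕ) : ℝ) by norm_num, ENNReal.rpow_natCast]
  simp only [h2] at h
  calc (∫⁻ x, g x ∂μ) ^ 2 ≤ ((∫⁻ x, g x ^ 2 ∂μ) ^ (1/2 : ℝ)) ^ 2 :=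
        pow_le_pow_left' h 2
    _ = ∫⁻ x, g x ^ 2 ∂μ := by
        rw [← ENNReal.rpow_natCast _ 2, ← ENNReal.rpow_mul]
        norm_num

/-- For a measure-preserving map `f` of a probability space `(X, μ)`, a measurable set `P`
and `ε > 0`, the set `{ n : ℕ | μ(f^{-[n]} P ∩ P) ≥ μ(P)²·(1 − ε) }` is infinite. -/
theorem infinite_setOf_measure_iterate_preimage_inter_ge
    {X : Type*} [MeasurableSpace X] (μ : Measure X) [IsProbabilityMeasure μ]
    (f : X → X) (hf : MeasurePreserving f μ μ) (P : Set X) (hP : MeasurableSet P)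
    (ε : ℝ) (hε : 0 < ε) :
    {n : ℕ | μ P ^ 2 * ENNReal.ofReal (1 - ε) ≤ μ (f^[n] ⁻¹' P ∩ P)}.Infinite := by
  set a := μ P with ha
  rcases eq_or_ne a 0 with h0 | h0
  · have : {n : ℕ | μ P ^ 2 * ENNReal.ofReal (1 - ε) ≤ μ (f^[n] ⁻¹' P ∩ P)} = Set.univ := by
      ext n; simp [← ha, h0]
    rw [this]; exact Set.infinite_univ
  rcases le_or_gt 1 ε with h1 | h1
  · have : {n : ℕ | μ P ^ 2 * ENNReal.ofReal (1 - ε) ≤ μ (f^[n] ⁻¹' P ∩ P)} = Set.univ := by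
      ext n
      simp [ENNReal.ofReal_eq_zero.mpr (by linarith : 1 - ε ≤ 0)]
    rw [this]; exact Set.infinite_univ
  by_contra hfin
  rw [Set.not_infinite] at hfin
  set c := a ^ 2 * ENNReal.ofReal (1 - ε) with hc
  obtain ⟨K, hK⟩ : ∃ K, ∀ n ≥ K, μ (f^[n] ⁻¹' P ∩ P) < c := by
    obtain ⟨K, hK⟩ := hfin.bddAbove
    refine ⟨K + 1, fun n hn => lt_of_not_ge fun h => ?_⟩
    have : n ≤ K := hK h
    omega
  have ha1 : a ≤ 1 := prob_le_one
  have hatop : a ≠ ⊤ := (lt_of_le_of_lt ha1 ENNReal.one_lt_top).ne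
  have hεpos : (0 : ℝ≥0∞) < ENNReal.ofReal ε := ENNReal.ofReal_pos.mpr hε
  -- choose M with 1 < (M+1) * a * ofReal ε
  obtain ⟨M, hM⟩ : ∃ M : ℕ, 1 < (M + 1 : ℝ≥0∞) * a * ENNReal.ofReal ε := by
    set t := a * ENNReal.ofReal ε with ht
    have ht0 : t ≠ 0 := by
      simp [ht, h0, hεpos.ne']
    have httop : t ≠ ⊤ := by
      simp [ht, ENNReal.mul_eq_top, hatop, ENNReal.ofReal_ne_top]
    obtain ⟨n, hn⟩ := ENNReal.exists_nat_gt (show 1 / t ≠ ⊤ by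
      simp [ENNReal.div_eq_top, ht0, httop])
    refine ⟨n, ?_⟩
    have h1t : 1 < (n : ℝ≥0∞) * t := by
      rwa [ENNReal.div_lt_iff (Or.inl ht0) (Or.inl httop)] at hn
    calc (1 : ℝ≥0∞) < (n : ℝ≥0∞) * t := h1t
      _ ≤ (n + 1 : ℝ≥0∞) * t := by gcongr; exact le_self_add
      _ = (n + 1 : ℝ≥0∞) * a * ENNReal.ofReal ε := by rw [ht, mul_assoc]
  set A : ℕ → Set X := fun i => f^[i * K] ⁻¹' P with hA
  have hAmeas : ∀ i, MeasurableSet (A i) := fun i => (hf.iterate (i * K)).measurable hP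
  have hμA : ∀ i, μ (A i) = a := fun i => (hf.iterate (i * K)).measure_preimage hP.nullMeasurableSet
  set g : X → ℝ≥0∞ := fun x => ∑ i ∈ Finset.range (M + 1), (A i).indicator 1 x with hg
  have hgmeas : Measurable g :=
    Finset.measurable_sum _ fun i _ => (measurable_one.indicator (hAmeas i))
  have hint : ∫⁻ x, g x ∂μ = (M + 1 : ℝ≥0∞) * a := by
    rw [hg]
    rw [lintegral_finset_sum _ fun i _ => measurable_one.indicator (hAmeas i)]
    have : ∀ i ∈ Finset.range (M + 1), (∫⁻ x, (A i).indicator 1 x ∂μ) = a := fun i _ => by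
      rw [lintegral_indicator_one (hAmeas i), hμA]
    rw [Finset.sum_congr rfl this, Finset.sum_const, Finset.card_range, nsmul_eq_mul]
    push_cast
    ring
  -- bound on off-diagonal intersections
  have hpair : ∀ i j : ℕ, i < j → μ (A i ∩ A j) ≤ c := by
    intro i j hij
    have hsub : A i ∩ A j = f^[i * K] ⁻¹' (P ∩ f^[(j - i) * K] ⁻¹' P) := by
      rw [Set.preimage_inter]
      congr 1
      rw [← Set.preimage_comp, ← Function.iterate_add]
      have : (j - i) * K + i * K = j * K := by
        have : j - i + i = j := Nat.sub_add_cancel hij.le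
        calc (j - i) * K + i * K = (j - i + i) * K := by ring
          _ = j * K := by rw [this]
      rw [this]
    rw [hsub, (hf.iterate (i * K)).measure_preimage
      (hP.inter ((hf.iterate ((j - i) * K)).measurable hP)).nullMeasurableSet,
      Set.inter_comm]
    exact (hK ((j - i) * K) (Nat.le_mul_of_pos_left K (by omega))).le
  have hpair' : ∀ i j : ℕ, i ≠ j → μ (A i ∩ A j) ≤ c := by
    intro i j hij
    rcases lt_or_gt_of_ne hij with h | h
    · exact hpair i j h
    · rw [Set.inter_comm]; exact hpair j i h
  have hsq : ∫⁻ x, g x ^ 2 ∂μ ≤ (M + 1 : ℝ≥0∞) * a + (M + 1 : ℝ≥0∞) ^ 2 * c := by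
    have hgx : ∀ x, g x ^ 2 = ∑ i ∈ Finset.range (M + 1), ∑ j ∈ Finset.range (M + 1),
        (A i ∩ A j).indicator 1 x := by
      intro x
      rw [sq, hg, Finset.sum_mul_sum]
      refine Finset.sum_congr rfl fun i _ => Finset.sum_congr rfl fun j _ => ?_
      rw [Set.inter_indicator_one]; rfl
    calc ∫⁻ x, g x ^ 2 ∂μ
        = ∑ i ∈ Finset.range (M + 1), ∑ j ∈ Finset.range (M + 1), μ (A i ∩ A j) := by
          simp only [hgx]
          rw [lintegral_finset_sum _ fun i _ => Finset.measurable_sum _ fun j _ =>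
            measurable_one.indicator ((hAmeas i).inter (hAmeas j))]
          refine Finset.sum_congr rfl fun i _ => ?_
          rw [lintegral_finset_sum _ fun j _ => measurable_one.indicator
            ((hAmeas i).inter (hAmeas j))]
          exact Finset.sum_congr rfl fun j _ =>
            lintegral_indicator_one ((hAmeas i).inter (hAmeas j))
      _ ≤ ∑ i ∈ Finset.range (M + 1), ∑ j ∈ Finset.range (M + 1),
            (if i = j then a else c) := by
          gcongr with i hi j hj
          split
          · next h => rw [h]; exact (measure_mono Set.inter_subset_left).trans (hμA j).le
          · next h => exact hpair' i j h
      _ ≤ (M + 1 : ℝ≥0∞) * a + (M + 1 : ℝ≥0∞) ^ 2 * c := by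
          have : ∀ i ∈ Finset.range (M+1), ∑ j ∈ Finset.range (M + 1),
              (if i = j then a else c) ≤ a + (M + 1 : ℝ≥0∞) * c := by
            intro i hi
            calc ∑ j ∈ Finset.range (M + 1), (if i = j then a else c)
                ≤ ∑ j ∈ Finset.range (M + 1), ((if i = j then a else 0) + c) := by
                  gcongr with j hj
                  split <;> simp
              _ = (∑ j ∈ Finset.range (M + 1), (if i = j then a else 0)) + (M+1 : ℝ≥0∞) * c := by
                  rw [Finset.sum_add_distrib, Finset.sum_const, Finset.card_range, nsmul_eq_mul]
                  push_cast; ring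
              _ ≤ a + (M + 1 : ℝ≥0∞) * c := by
                  gcongr
                  rw [Finset.sum_ite_eq (Finset.range (M+1)) i (fun _ => a)]
                  split <;> simp
          calc ∑ i ∈ Finset.range (M + 1), ∑ j ∈ Finset.range (M + 1),
                (if i = j then a else c)
              ≤ ∑ i ∈ Finset.range (M + 1), (a + (M + 1 : ℝ≥0∞) * c) :=
                Finset.sum_le_sum this
            _ = (M + 1 : ℝ≥0∞) * a + (M + 1 : ℝ≥0∞) ^ 2 * c := by
                rw [Finset.sum_const, Finset.card_range, nsmul_eq_mul]
                push_cast; ring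
  have hCS := aux_sq_lintegral_le μ hgmeas
  rw [hint] at hCS
  have hmain : ((M + 1 : ℝ≥0∞) * a) ^ 2 ≤ (M + 1 : ℝ≥0∞) * a + (M + 1 : ℝ≥0∞) ^ 2 * c :=
    hCS.trans hsq
  -- split the LHS using ofReal ε + ofReal (1 - ε) = 1
  have hsplit : ((M + 1 : ℝ≥0∞) * a) ^ 2
      = (M + 1 : ℝ≥0∞) ^ 2 * a ^ 2 * ENNReal.ofReal ε + (M + 1 : ℝ≥0∞) ^ 2 * c := by
    rw [hc]
    have : ENNReal.ofReal ε + ENNReal.ofReal (1 - ε) = 1 := by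
      rw [← ENNReal.ofReal_add hε.le (by linarith)]
      norm_num
    calc ((M + 1 : ℝ≥0∞) * a) ^ 2 = (M + 1 : ℝ≥0∞) ^ 2 * a ^ 2 * 1 := by ring
      _ = (M + 1 : ℝ≥0∞) ^ 2 * a ^ 2 * (ENNReal.ofReal ε + ENNReal.ofReal (1 - ε)) := by
          rw [this]
      _ = (M + 1 : ℝ≥0∞) ^ 2 * a ^ 2 * ENNReal.ofReal ε
          + (M + 1 : ℝ≥0∞) ^ 2 * (a ^ 2 * ENNReal.ofReal (1 - ε)) := by ring
  rw [hsplit] at hmain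
  have hctop : (M + 1 : ℝ≥0∞) ^ 2 * c ≠ ⊤ := by
    rw [hc]
    exact ENNReal.mul_ne_top
      (ENNReal.pow_ne_top (ENNReal.add_ne_top.mpr ⟨ENNReal.natCast_ne_top M, ENNReal.one_ne_top⟩))
      (ENNReal.mul_ne_top (ENNReal.pow_ne_top hatop) ENNReal.ofReal_ne_top)
  have hcancel : (M + 1 : ℝ≥0∞) ^ 2 * a ^ 2 * ENNReal.ofReal ε ≤ (M + 1 : ℝ≥0∞) * a :=
    (ENNReal.add_le_add_iff_right hctop).mp hmain
  have hMa0 : (M + 1 : ℝ≥0∞) * a ≠ 0 := by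
    simp [h0]
  have hMatop : (M + 1 : ℝ≥0∞) * a ≠ ⊤ :=
    ENNReal.mul_ne_top (ENNReal.add_ne_top.mpr ⟨ENNReal.natCast_ne_top M, ENNReal.one_ne_top⟩) hatop
  have hlt : (M + 1 : ℝ≥0∞) * a < (M + 1 : ℝ≥0∞) ^ 2 * a ^ 2 * ENNReal.ofReal ε := by
    have : (M + 1 : ℝ≥0∞) ^ 2 * a ^ 2 * ENNReal.ofReal ε
        = ((M + 1 : ℝ≥0∞) * a) * ((M + 1 : ℝ≥0∞) * a * ENNReal.ofReal ε) := by ring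
    rw [this]
    conv_lhs => rw [← mul_one ((M + 1 : ℝ≥0∞) * a)]
    exact ENNReal.mul_lt_mul_right hMa0 hMatop hM
  exact absurd (hlt.trans_le hcancel) (lt_irrefl _)
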